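/- Let 𝒞 be a nested set of tight cuts and A a tight cut not nested with some B ∈ 𝒞. Writing μ(D, 𝒞) for the number of cuts in 𝒞 not nested with D, we have μ(A∩B, 𝒞) + μ(A∩B*, 𝒞) < μ(A, 𝒞). -/

import Mathlib

open Set

variable {V : Type*}

def cobound (G : SimpleGraph V) (A : Set V) : Set (Sym2 V) :=
  {e | e ∈ G.edgeSet ∧ ∃ u v, e = s(u, v) ∧ u ∈ A ∧ v ∉ A}

def IsCut (G : SimpleGraph V) (A : Set V) : Prop := (cobound G A).Finite

def Tight (G : SimpleGraph V) (A : Set V) : Prop :=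
  (G.induce A).Connected ∧ (G.induce Aᶜ).Connected

def Nested (A B : Set V) : Prop :=
  A ∩ B = ∅ ∨ A ∩ Bᶜ = ∅ ∨ Aᶜ ∩ B = ∅ ∨ Aᶜ ∩ Bᶜ = ∅

/-- `μ(D, 𝒞)`: the number of cuts in `𝒞` not nested with `D`. -/
noncomputable def mu (D : Set V) (𝒞 : Set (Set V)) : ℕ :=
  {C | C ∈ 𝒞 ∧ ¬ Nested C D}.ncard

lemma not_nested_iff (X Y : Set V) :
    ¬ Nested X Y ↔ (X ∩ Y).Nonempty ∧ (X ∩ Yᶜ).Nonempty ∧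
      (Xᶜ ∩ Y).Nonempty ∧ (Xᶜ ∩ Yᶜ).Nonempty := by
  simp only [Nested, Set.nonempty_iff_ne_empty]
  tauto

lemma nested_compl_right {A B : Set V} (h : Nested A B) : Nested A Bᶜ := by
  rcases h with h | h | h | h
  · right; left; simpa using h
  · left; exact h
  · right; right; right; simpa using h
  · right; right; left; exact h

lemma nested_swap {A B : Set V} (h : Nested A B) : Nested B A := by
  rcases h with h | h | h | h
  · left; rwa [Set.inter_comm]
  · right; right; left; rwa [Set.inter_comm]
  · right; left; rwa [Set.inter_comm]
  · right; right; right; rwa [Set.inter_comm]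

/-- Key: a cut nested with `B` that crosses `A ∩ B` must cross `A` (given `A` crosses `B`). -/
lemma key_cross (A B C : Set V) (hCB : Nested C B) (hAB : ¬ Nested A B)
    (h : ¬ Nested C (A ∩ B)) : ¬ Nested C A := by
  rw [not_nested_iff] at h hAB ⊢
  obtain ⟨h1, h2, h3, h4⟩ := h
  obtain ⟨-, -, -, a4⟩ := hAB
  refine ⟨h1.mono (by intro x hx; exact ⟨hx.1, hx.2.1⟩),
    ?_, h3.mono (by intro x hx; exact ⟨hx.1, hx.2.1⟩), ?_⟩
  · -- (C ∩ Aᶜ).Nonempty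
    rcases hCB with hc | hc | hc | hc
    · exfalso
      obtain ⟨x, hx⟩ := h1
      rw [Set.eq_empty_iff_forall_notMem] at hc
      exact hc x ⟨hx.1, hx.2.2⟩
    · -- C ⊆ B
      obtain ⟨x, hxC, hx⟩ := h2
      rw [Set.eq_empty_iff_forall_notMem] at hc
      have hxB : x ∈ B := by by_contra hb; exact hc x ⟨hxC, hb⟩
      refine ⟨x, hxC, fun hxA => hx ⟨hxA, hxB⟩⟩
    · exfalso
      obtain ⟨x, hx⟩ := h3
      rw [Set.eq_empty_iff_forall_notMem] at hc
      exact hc x ⟨hx.1, hx.2.2⟩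
    · -- Bᶜ ⊆ C
      obtain ⟨x, hxA, hxB⟩ := a4
      rw [Set.eq_empty_iff_forall_notMem] at hc
      have hxC : x ∈ C := by by_contra hcx; exact hc x ⟨hcx, hxB⟩
      exact ⟨x, hxC, hxA⟩
  · -- (Cᶜ ∩ Aᶜ).Nonempty
    rcases hCB with hc | hc | hc | hc
    · exfalso
      obtain ⟨x, hx⟩ := h1
      rw [Set.eq_empty_iff_forall_notMem] at hc
      exact hc x ⟨hx.1, hx.2.2⟩
    · -- C ⊆ B
      obtain ⟨x, hxA, hxB⟩ := a4
      rw [Set.eq_empty_iff_forall_notMem] at hc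
      have hxC : x ∉ C := fun hxc => hc x ⟨hxc, hxB⟩
      exact ⟨x, hxC, hxA⟩
    · exfalso
      obtain ⟨x, hx⟩ := h3
      rw [Set.eq_empty_iff_forall_notMem] at hc
      exact hc x ⟨hx.1, hx.2.2⟩
    · -- Bᶜ ⊆ C, so Cᶜ ⊆ B
      obtain ⟨x, hxC, hx⟩ := h4
      rw [Set.eq_empty_iff_forall_notMem] at hc
      have hxB : x ∈ B := by by_contra hb; exact hc x ⟨hxC, hb⟩
      refine ⟨x, hxC, fun hxA => hx ⟨hxA, hxB⟩⟩

/-- A cut nested with `B` cannot cross both corners. -/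
lemma key_disj (A B C : Set V) (hCB : Nested C B) :
    Nested C (A ∩ B) ∨ Nested C (A ∩ Bᶜ) := by
  rcases hCB with hc | hc | hc | hc
  · left; left
    rw [Set.eq_empty_iff_forall_notMem] at hc ⊢
    exact fun x hx => hc x ⟨hx.1, hx.2.2⟩
  · right; left
    rw [Set.eq_empty_iff_forall_notMem] at hc ⊢
    exact fun x hx => hc x ⟨hx.1, hx.2.2⟩
  · left; right; right; left
    rw [Set.eq_empty_iff_forall_notMem] at hc ⊢
    exact fun x hx => hc x ⟨hx.1, hx.2.2⟩
  · right; right; right; left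
    rw [Set.eq_empty_iff_forall_notMem] at hc ⊢
    exact fun x hx => hc x ⟨hx.1, hx.2.2⟩

lemma nested_corner1 (A B : Set V) : Nested B (A ∩ B) := by
  right; right; left
  rw [Set.eq_empty_iff_forall_notMem]
  exact fun x hx => hx.1 hx.2.2

lemma nested_corner2 (A B : Set V) : Nested B (A ∩ Bᶜ) := by
  left
  rw [Set.eq_empty_iff_forall_notMem]
  exact fun x hx => hx.2.2 hx.1

/-- if `𝒞` is a nested set of tight cuts and `A` is a tight cut not nested
with some `B ∈ 𝒞`, then `μ(A∩B, 𝒞) + μ(A∩B*, 𝒞) < μ(A, 𝒞)`. -/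
theorem corners_mu_lt (G : SimpleGraph V) (hconn : G.Connected)
    (𝒞 : Set (Set V))
    (h𝒞cut : ∀ C ∈ 𝒞, IsCut G C ∧ Tight G C)
    (h𝒞nested : ∀ C ∈ 𝒞, ∀ D ∈ 𝒞, Nested C D)
    (A : Set V) (hAcut : IsCut G A) (hAtight : Tight G A)
    (B : Set V) (hB : B ∈ 𝒞) (hAB : ¬ Nested A B)
    (hfin : {C | C ∈ 𝒞 ∧ ¬ Nested C A}.Finite) :
    mu (A ∩ B) 𝒞 + mu (A ∩ Bᶜ) 𝒞 < mu A 𝒞 := by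
  classical
  set S1 : Set (Set V) := {C | C ∈ 𝒞 ∧ ¬ Nested C (A ∩ B)} with hS1
  set S2 : Set (Set V) := {C | C ∈ 𝒞 ∧ ¬ Nested C (A ∩ Bᶜ)} with hS2
  set SA : Set (Set V) := {C | C ∈ 𝒞 ∧ ¬ Nested C A} with hSA
  have hAB' : ¬ Nested A Bᶜ := fun h => hAB (by simpa using nested_compl_right h)
  have hsub1 : S1 ⊆ SA \ {B} := by
    rintro C ⟨hC, hcross⟩
    refine ⟨⟨hC, key_cross A B C (h𝒞nested C hC B hB) hAB hcross⟩, ?_⟩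
    rintro rfl
    exact hcross (nested_corner1 A C)
  have hsub2 : S2 ⊆ SA \ {B} := by
    rintro C ⟨hC, hcross⟩
    refine ⟨⟨hC, ?_⟩, ?_⟩
    · have hCBc : Nested C Bᶜ := nested_compl_right (h𝒞nested C hC B hB)
      have := key_cross A Bᶜ C hCBc hAB' hcross
      exact this
    · rintro rfl
      exact hcross (nested_corner2 A C)
  have hdisj : Disjoint S1 S2 := by
    rw [Set.disjoint_left]
    rintro C ⟨hC, h1⟩ ⟨_, h2⟩
    rcases key_disj A B C (h𝒞nested C hC B hB) with h | h
    · exact h1 h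
    · exact h2 h
  have hfinSA : SA.Finite := hfin
  have hfin1 : S1.Finite := hfinSA.subset (fun C hC => (hsub1 hC).1)
  have hfin2 : S2.Finite := hfinSA.subset (fun C hC => (hsub2 hC).1)
  have hBSA : B ∈ SA := ⟨hB, fun h => hAB (nested_swap h)⟩
  have hunion : S1 ∪ S2 ⊆ SA \ {B} := Set.union_subset hsub1 hsub2
  have h1 : mu (A ∩ B) 𝒞 + mu (A ∩ Bᶜ) 𝒞 = (S1 ∪ S2).ncard := by
    rw [mu, mu, Set.ncard_union_eq hdisj hfin1 hfin2]
  rw [h1, mu]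
  calc (S1 ∪ S2).ncard ≤ (SA \ {B}).ncard :=
        Set.ncard_le_ncard hunion hfinSA.diff
    _ < SA.ncard := Set.ncard_diff_singleton_lt_of_mem hBSA hfinSA
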